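/- Let (X,d) be a complete metric space and let S = (X,(φ_j)_{j=1}^L,(p_j)_{j=1}^L) be an IFS with probabilities in which every φ_j is Lipschitz with constant at most α_S < 1, and let μ_S be its Hutchinson measure (the unique compactly supported Borel probability measure with Σ_j p_j φ_j♯μ_S = μ_S). Let ε > 0, let X̂ be a proper ε-net of X, let r : X → X̂ be a Borel measurable ε-projection, and define the discretized Markov operator M_Ŝ(ν) := Σ_{j=1}^L p_j · (r∘φ_j)♯ν. Then for every Borel probability measure ν with compact support contained in X̂ and every n ∈ ℕ, d_MK(M_Ŝⁿ(ν), μ_S) ≤ ε/(1−α_S) + α_Sⁿ · d_MK(ν, μ_S). In particular, for all sufficiently large n, d_MK(M_Ŝⁿ(ν), μ_S) ≤ 2ε/(1−α_S). -/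
import Mathlib


open MeasureTheory Filter

set_option linter.unusedSectionVars false
set_option maxHeartbeats 1000000

/-- The Monge–Kantorovich (Hutchinson) distance between two measures. -/
noncomputable def dMK {X : Type*} [MetricSpace X] [MeasurableSpace X]
    (μ ν : Measure X) : ℝ :=
  sSup {s : ℝ | ∃ f : X → ℝ, LipschitzWith 1 f ∧ s = |∫ x, f x ∂μ - ∫ x, f x ∂ν|}

/-- The topological support of a Borel measure. -/
def msupport {X : Type*} [TopologicalSpace X] [MeasurableSpace X]
    (μ : Measure X) : Set X :=
  {x | ∀ U : Set X, IsOpen U → x ∈ U → 0 < μ U}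

section aux
variable {X : Type*} [MetricSpace X] [MeasurableSpace X] [BorelSpace X]

lemma lip_integrable {Kc : NNReal} {f : X → ℝ} (hf : LipschitzWith Kc f)
    {μ : Measure X} [IsProbabilityMeasure μ] {S : Set X} (hS : IsCompact S)
    (hSμ : μ Sᶜ = 0) : Integrable f μ := by
  obtain ⟨C, hC⟩ := hS.exists_bound_of_continuousOn hf.continuous.continuousOn
  refine (integrable_const C).mono' hf.continuous.aestronglyMeasurable ?_
  rw [ae_iff]
  exact measure_mono_null (fun x hx => fun hxS => hx (hC x hxS)) hSμ

lemma zero_mem_dset (μ ν : Measure X) :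
    (0:ℝ) ∈ {s : ℝ | ∃ f : X → ℝ, LipschitzWith 1 f ∧ s = |∫ x, f x ∂μ - ∫ x, f x ∂ν|} :=
  ⟨fun _ => 0, LipschitzWith.const' 0, by simp⟩

lemma dset_bddAbove {μ ν : Measure X} [IsProbabilityMeasure μ] [IsProbabilityMeasure ν]
    {Sμ Sν : Set X} (hSμc : IsCompact Sμ) (hSνc : IsCompact Sν)
    (hμ0 : μ Sμᶜ = 0) (hν0 : ν Sνᶜ = 0) :
    BddAbove {s : ℝ | ∃ f : X → ℝ, LipschitzWith 1 f ∧ s = |∫ x, f x ∂μ - ∫ x, f x ∂ν|} := by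
  have hne : Sμ.Nonempty := by
    by_contra h
    rw [Set.not_nonempty_iff_eq_empty] at h
    rw [h, Set.compl_empty] at hμ0
    exact one_ne_zero ((measure_univ (μ := μ)).symm.trans hμ0)
  obtain ⟨x0, _⟩ := hne
  obtain ⟨C, hC⟩ := ((hSμc.union hSνc).isBounded).subset_closedBall x0
  refine ⟨2 * C, ?_⟩
  rintro s ⟨f, hf, rfl⟩
  have key : ∀ (ρ : Measure X) (S : Set X), IsCompact S → ρ Sᶜ = 0 →
      S ⊆ Metric.closedBall x0 C → ∀ _ : IsProbabilityMeasure ρ,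
      |∫ x, f x ∂ρ - f x0| ≤ C := by
    intro ρ S hScomp hSnull hSball hprob
    have hint : Integrable f ρ := lip_integrable hf hScomp hSnull
    have h1 : ∫ x, f x ∂ρ - f x0 = ∫ x, (f x - f x0) ∂ρ := by
      rw [integral_sub hint (integrable_const _), integral_const]
      simp
    rw [h1, ← Real.norm_eq_abs]
    have hb : ∀ᵐ x ∂ρ, ‖f x - f x0‖ ≤ C := by
      rw [ae_iff]
      refine measure_mono_null (fun x hx => fun hxS => hx ?_) hSnull
      have h2 : dist (f x) (f x0) ≤ dist x x0 := by
        simpa using hf.dist_le_mul x x0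
      have h3 : dist x x0 ≤ C := hSball hxS
      calc ‖f x - f x0‖ = dist (f x) (f x0) := by rw [Real.dist_eq, Real.norm_eq_abs]
        _ ≤ C := h2.trans h3
    calc ‖∫ x, (f x - f x0) ∂ρ‖ ≤ C * (ρ Set.univ).toReal :=
          norm_integral_le_of_norm_le_const hb
      _ = C := by simp
  have h1 := key μ Sμ hSμc hμ0 (fun x hx => hC (Set.mem_union_left _ hx)) inferInstance
  have h2 := key ν Sν hSνc hν0 (fun x hx => hC (Set.mem_union_right _ hx)) inferInstance
  calc |∫ x, f x ∂μ - ∫ x, f x ∂ν|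
      = |(∫ x, f x ∂μ - f x0) - (∫ x, f x ∂ν - f x0)| := by ring_nf
    _ ≤ |∫ x, f x ∂μ - f x0| + |∫ x, f x ∂ν - f x0| := abs_sub _ _
    _ ≤ 2 * C := by linarith

lemma le_dMK {μ ν : Measure X}
    (hbdd : BddAbove {s : ℝ | ∃ f : X → ℝ, LipschitzWith 1 f ∧ s = |∫ x, f x ∂μ - ∫ x, f x ∂ν|})
    {f : X → ℝ} (hf : LipschitzWith 1 f) :
    |∫ x, f x ∂μ - ∫ x, f x ∂ν| ≤ dMK μ ν :=
  le_csSup hbdd ⟨f, hf, rfl⟩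

lemma dMK_nonneg {μ ν : Measure X}
    (hbdd : BddAbove {s : ℝ | ∃ f : X → ℝ, LipschitzWith 1 f ∧ s = |∫ x, f x ∂μ - ∫ x, f x ∂ν|}) :
    0 ≤ dMK μ ν :=
  le_csSup hbdd (zero_mem_dset μ ν)

lemma dMK_le {μ ν : Measure X} {c : ℝ}
    (h : ∀ f : X → ℝ, LipschitzWith 1 f → |∫ x, f x ∂μ - ∫ x, f x ∂ν| ≤ c) :
    dMK μ ν ≤ c := by
  refine Real.sSup_le ?_ ?_
  · rintro s ⟨f, hf, rfl⟩; exact h f hf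
  · have := h (fun _ => 0) (LipschitzWith.const' 0)
    simpa using this

lemma dMK_triangle {μ σ ν : Measure X}
    (h1 : BddAbove {s : ℝ | ∃ f : X → ℝ, LipschitzWith 1 f ∧ s = |∫ x, f x ∂μ - ∫ x, f x ∂σ|})
    (h2 : BddAbove {s : ℝ | ∃ f : X → ℝ, LipschitzWith 1 f ∧ s = |∫ x, f x ∂σ - ∫ x, f x ∂ν|}) :
    dMK μ ν ≤ dMK μ σ + dMK σ ν := by
  refine dMK_le fun f hf => ?_
  calc |∫ x, f x ∂μ - ∫ x, f x ∂ν|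
      ≤ |∫ x, f x ∂μ - ∫ x, f x ∂σ| + |∫ x, f x ∂σ - ∫ x, f x ∂ν| := abs_sub_le _ _ _
    _ ≤ dMK μ σ + dMK σ ν := add_le_add (le_dMK h1 hf) (le_dMK h2 hf)

end aux

section mop
variable {X : Type*} [MetricSpace X] [MeasurableSpace X] [BorelSpace X]

lemma Mop_prob {L : ℕ} {p : Fin L → NNReal} (hp1 : ∑ j, p j = 1)
    {w : Fin L → X → X} (hw : ∀ j, Measurable (w j))
    (ρ : Measure X) [IsProbabilityMeasure ρ] :
    IsProbabilityMeasure (∑ j, p j • ρ.map (w j)) := by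
  constructor
  rw [Measure.finset_sum_apply]
  have h : ∀ j : Fin L, (p j • ρ.map (w j)) Set.univ = (p j : ENNReal) := by
    intro j
    rw [Measure.smul_apply, Measure.map_apply (hw j) MeasurableSet.univ]
    simp [ENNReal.smul_def]
  rw [Finset.sum_congr rfl (fun j _ => h j), ← ENNReal.coe_finset_sum, hp1, ENNReal.coe_one]

lemma Mop_null {L : ℕ} (p : Fin L → NNReal)
    {w : Fin L → X → X} (hw : ∀ j, Measurable (w j))
    {ρ : Measure X} {K K' : Set X} (hρ : ρ Kᶜ = 0) (hK' : MeasurableSet K')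
    (him : ∀ j, ∀ x ∈ K, w j x ∈ K') :
    (∑ j, p j • ρ.map (w j)) K'ᶜ = 0 := by
  rw [Measure.finset_sum_apply]
  refine Finset.sum_eq_zero fun j _ => ?_
  have hsub : (w j) ⁻¹' K'ᶜ ⊆ Kᶜ := fun x hx hxK => hx (him j x hxK)
  rw [Measure.smul_apply, Measure.map_apply (hw j) hK'.compl,
    measure_mono_null hsub hρ]
  simp

lemma Mop_integral {L : ℕ} (p : Fin L → NNReal)
    {w : Fin L → X → X} (hw : ∀ j, Measurable (w j))
    {ρ : Measure X} [IsProbabilityMeasure ρ] {K K' : Set X}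
    (hK' : IsCompact K') (hρ : ρ Kᶜ = 0)
    (him : ∀ j, ∀ x ∈ K, w j x ∈ K')
    {c : NNReal} {f : X → ℝ} (hf : LipschitzWith c f) :
    ∫ x, f x ∂(∑ j, p j • ρ.map (w j)) = ∑ j, (p j : ℝ) * ∫ x, f (w j x) ∂ρ := by
  have hmap : ∀ j, (ρ.map (w j)) K'ᶜ = 0 := fun j => by
    rw [Measure.map_apply (hw j) hK'.isClosed.measurableSet.compl]
    have hsub : (w j) ⁻¹' K'ᶜ ⊆ Kᶜ := fun x hx hxK => hx (him j x hxK)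
    exact measure_mono_null hsub hρ
  have hprob : ∀ j, IsProbabilityMeasure (ρ.map (w j)) := fun j =>
    Measure.isProbabilityMeasure_map (hw j).aemeasurable
  have hint : ∀ j : Fin L, Integrable f (ρ.map (w j)) := fun j =>
    haveI := hprob j
    lip_integrable hf hK' (hmap j)
  have hints : ∀ j ∈ Finset.univ, Integrable f ((p j : ENNReal) • ρ.map (w j)) :=
    fun j _ => (hint j).smul_measure ENNReal.coe_ne_top
  have hsum : (∑ j, p j • ρ.map (w j)) = ∑ j, (p j : ENNReal) • ρ.map (w j) := rfl
  rw [hsum, integral_finset_sum_measure hints]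
  refine Finset.sum_congr rfl fun j _ => ?_
  rw [show (p j : ENNReal) • ρ.map (w j) = p j • ρ.map (w j) from rfl,
    integral_smul_nnreal_measure,
    integral_map (hw j).aemeasurable hf.continuous.aestronglyMeasurable]
  simp [NNReal.smul_def, smul_eq_mul]

end mop

/-- Discrete approximation of the Hutchinson measure of an IFS with
probabilities: iterates of the discretized Markov operator on any probability
measure supported in a proper `ε`-net approximate the Hutchinson measure `μ_S`
with error `ε/(1−α_S) + α_Sⁿ · d_MK(ν, μ_S)`, and eventually with error
`2ε/(1−α_S)`. -/
theorem stmt18 {X : Type*} [MetricSpace X] [CompleteSpace X]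
    [MeasurableSpace X] [BorelSpace X]
    {L : ℕ} (hL : 0 < L)
    (φ : Fin L → X → X) (αS : NNReal) (hαS : αS < 1)
    (hφ : ∀ j, LipschitzWith αS (φ j))
    (p : Fin L → NNReal) (hp : ∀ j, 0 < p j) (hp1 : ∑ j, p j = 1)
    (μS : Measure X) [IsProbabilityMeasure μS]
    (hμSc : ∃ K : Set X, IsCompact K ∧ μS Kᶜ = 0)
    (hμSfix : (∑ j, p j • μS.map (φ j)) = μS)
    (ε : ℝ) (hε : 0 < ε) (Xhat : Set X)
    (hnet : ∀ x : X, ∃ y ∈ Xhat, dist x y ≤ ε)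
    (hproper : ∀ D : Set X, Bornology.IsBounded D → (D ∩ Xhat).Finite)
    (r : X → X) (hrm : Measurable r)
    (hr_range : ∀ x, r x ∈ Xhat)
    (hr_id : ∀ x ∈ Xhat, r x = x)
    (hr_close : ∀ x, dist x (r x) ≤ ε)
    (ν : Measure X) [IsProbabilityMeasure ν]
    (hνc : ∃ K : Set X, IsCompact K ∧ ν Kᶜ = 0)
    (hνsupp : msupport ν ⊆ Xhat) :
    (∀ n : ℕ,
      dMK ((fun ρ : Measure X => ∑ j, p j • ρ.map (r ∘ φ j))^[n] ν) μS
        ≤ ε / (1 - αS) + (αS : ℝ) ^ n * dMK ν μS) ∧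
    ∀ᶠ n in atTop,
      dMK ((fun ρ : Measure X => ∑ j, p j • ρ.map (r ∘ φ j))^[n] ν) μS
        ≤ 2 * ε / (1 - αS) := by
  obtain ⟨KS, hKSc, hKS0⟩ := hμSc
  obtain ⟨Kν, hKνc, hKν0⟩ := hνc
  have hXne : Nonempty X := by
    rcases isEmpty_or_nonempty X with h | h
    · exfalso
      have h1 : (Set.univ : Set X) = ∅ := Set.univ_eq_empty_iff.2 h
      have h2 := measure_univ (μ := μS)
      rw [h1] at h2; simp at h2
    · exact h
  have hφm : ∀ j, Measurable (φ j) := fun j => (hφ j).continuous.measurable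
  have hwm : ∀ j, Measurable (r ∘ φ j) := fun j => hrm.comp (hφm j)
  have hα0 : (0:ℝ) ≤ (αS:ℝ) := αS.coe_nonneg
  have hα1 : (αS:ℝ) < 1 := hαS
  have h1α : (0:ℝ) < 1 - (αS:ℝ) := by linarith
  set Mhat : Measure X → Measure X := fun ρ => ∑ j, p j • ρ.map (r ∘ φ j) with hMhatdef
  set Mphi : Measure X → Measure X := fun ρ => ∑ j, p j • ρ.map (φ j) with hMphidef
  -- image compacts
  have himφ : ∀ K : Set X, IsCompact K → ∃ K', IsCompact K' ∧ ∀ j, ∀ x ∈ K, φ j x ∈ K' :=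
    fun K hK => ⟨⋃ j, φ j '' K, isCompact_iUnion (fun j => hK.image (hφ j).continuous),
      fun j x hx => Set.mem_iUnion.2 ⟨j, Set.mem_image_of_mem _ hx⟩⟩
  have himr : ∀ K : Set X, IsCompact K → ∃ K', IsCompact K' ∧ ∀ j, ∀ x ∈ K, (r ∘ φ j) x ∈ K' := by
    intro K hK
    refine ⟨(⋃ j, Metric.cthickening ε (φ j '' K)) ∩ Xhat, ?_, ?_⟩
    · refine Set.Finite.isCompact (hproper _ ?_)
      exact Bornology.isBounded_iUnion.2 fun j =>
        ((hK.image (hφ j).continuous).isBounded).cthickening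
    · intro j x hx
      refine ⟨Set.mem_iUnion.2 ⟨j, ?_⟩, hr_range _⟩
      exact Metric.mem_cthickening_of_dist_le _ _ _ _ (Set.mem_image_of_mem _ hx)
        (by rw [dist_comm]; exact hr_close _)
  -- niceness of iterates
  have hnice : ∀ n : ℕ, IsProbabilityMeasure (Mhat^[n] ν) ∧
      ∃ K, IsCompact K ∧ (Mhat^[n] ν) Kᶜ = 0 := by
    intro n
    induction n with
    | zero => exact ⟨‹IsProbabilityMeasure ν›, Kν, hKνc, hKν0⟩
    | succ n ih =>
      obtain ⟨hprob, K, hKc, hK0⟩ := ih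
      obtain ⟨K', hK'c, hK'⟩ := himr K hKc
      rw [Function.iterate_succ_apply']
      haveI := hprob
      exact ⟨Mop_prob hp1 hwm _, K', hK'c,
        Mop_null p hwm hK0 hK'c.isClosed.measurableSet hK'⟩
  have hpsum : ∑ j, (p j : ℝ) = 1 := by
    rw [← NNReal.coe_sum, hp1, NNReal.coe_one]
  -- perturbation bound
  have hpert : ∀ (ρ : Measure X), IsProbabilityMeasure ρ → ∀ K, IsCompact K → ρ Kᶜ = 0 →
      dMK (Mhat ρ) (Mphi ρ) ≤ ε := by
    intro ρ hprob K hKc hK0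
    haveI := hprob
    obtain ⟨K1, hK1c, hK1⟩ := himφ K hKc
    obtain ⟨K2, hK2c, hK2⟩ := himr K hKc
    refine dMK_le fun f hf => ?_
    rw [show Mhat ρ = ∑ j, p j • ρ.map (r ∘ φ j) from rfl,
      show Mphi ρ = ∑ j, p j • ρ.map (φ j) from rfl,
      Mop_integral p hwm hK2c hK0 hK2 hf, Mop_integral p hφm hK1c hK0 hK1 hf,
      ← Finset.sum_sub_distrib]
    have hintφ : ∀ j, Integrable (fun x => f (φ j x)) ρ := fun j =>
      lip_integrable (hf.comp (hφ j)) hKc hK0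
    have hintr : ∀ j : Fin L, Integrable (fun x => f ((r ∘ φ j) x)) ρ := by
      intro j
      haveI : IsProbabilityMeasure (ρ.map (r ∘ φ j)) :=
        Measure.isProbabilityMeasure_map (hwm j).aemeasurable
      have hnull : (ρ.map (r ∘ φ j)) K2ᶜ = 0 := by
        rw [Measure.map_apply (hwm j) hK2c.isClosed.measurableSet.compl]
        have hsub : (r ∘ φ j) ⁻¹' K2ᶜ ⊆ Kᶜ := fun x hx hxK => hx (hK2 j x hxK)
        exact measure_mono_null hsub hK0
      have h1 : Integrable f (ρ.map (r ∘ φ j)) := lip_integrable hf hK2c hnull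
      exact (integrable_map_measure hf.continuous.aestronglyMeasurable
        (hwm j).aemeasurable).mp h1
    calc |∑ j, ((p j : ℝ) * ∫ x, f ((r ∘ φ j) x) ∂ρ - (p j : ℝ) * ∫ x, f (φ j x) ∂ρ)|
        ≤ ∑ j, |(p j : ℝ) * ∫ x, f ((r ∘ φ j) x) ∂ρ - (p j : ℝ) * ∫ x, f (φ j x) ∂ρ| :=
          Finset.abs_sum_le_sum_abs _ _
      _ ≤ ∑ j, (p j : ℝ) * ε := by
          refine Finset.sum_le_sum fun j _ => ?_
          rw [← mul_sub, abs_mul, abs_of_nonneg (p j).coe_nonneg]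
          refine mul_le_mul_of_nonneg_left ?_ (p j).coe_nonneg
          rw [← integral_sub (hintr j) (hintφ j), ← Real.norm_eq_abs]
          have hb : ∀ x : X, ‖f ((r ∘ φ j) x) - f (φ j x)‖ ≤ ε := by
            intro x
            have h2 : dist (f (r (φ j x))) (f (φ j x)) ≤ dist (r (φ j x)) (φ j x) := by
              simpa using hf.dist_le_mul (r (φ j x)) (φ j x)
            have h3 : dist (r (φ j x)) (φ j x) ≤ ε := by
              rw [dist_comm]; exact hr_close _
            calc ‖f ((r ∘ φ j) x) - f (φ j x)‖ = dist (f (r (φ j x))) (f (φ j x)) := by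
                  rw [Real.dist_eq, Real.norm_eq_abs]; rfl
              _ ≤ ε := h2.trans h3
          calc ‖∫ x, (f ((r ∘ φ j) x) - f (φ j x)) ∂ρ‖ ≤ ε * (ρ Set.univ).toReal :=
                norm_integral_le_of_norm_le_const (Filter.Eventually.of_forall hb)
            _ = ε := by simp
      _ = ε := by rw [← Finset.sum_mul, hpsum, one_mul]
  -- contraction bound
  have hcontr : ∀ (ρ ρ' : Measure X), IsProbabilityMeasure ρ → IsProbabilityMeasure ρ' →
      ∀ K K', IsCompact K → IsCompact K' → ρ Kᶜ = 0 → ρ' K'ᶜ = 0 →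
      dMK (Mphi ρ) (Mphi ρ') ≤ (αS:ℝ) * dMK ρ ρ' := by
    intro ρ ρ' h1 h2 K K' hKc hK'c hK0 hK'0
    haveI := h1; haveI := h2
    have hbdd := dset_bddAbove hKc hK'c hK0 hK'0
    refine dMK_le fun f hf => ?_
    obtain ⟨K1, hK1c, hK1⟩ := himφ K hKc
    obtain ⟨K1', hK1'c, hK1'⟩ := himφ K' hK'c
    rw [show Mphi ρ = ∑ j, p j • ρ.map (φ j) from rfl,
      show Mphi ρ' = ∑ j, p j • ρ'.map (φ j) from rfl,
      Mop_integral p hφm hK1c hK0 hK1 hf, Mop_integral p hφm hK1'c hK'0 hK1' hf,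
      ← Finset.sum_sub_distrib]
    have hj : ∀ j : Fin L, |∫ x, f (φ j x) ∂ρ - ∫ x, f (φ j x) ∂ρ'| ≤ (αS:ℝ) * dMK ρ ρ' := by
      intro j
      rcases eq_or_lt_of_le hα0 with h0 | h0
      · -- αS = 0 : φ j is constant
        obtain ⟨x0⟩ := hXne
        have hconst : ∀ x : X, φ j x = φ j x0 := by
          intro x
          have := (hφ j).dist_le_mul x x0
          rw [← h0] at this
          simp only [NNReal.coe_zero, zero_mul] at this
          exact dist_le_zero.mp (by simpa using this)
        have heq : (fun x => f (φ j x)) = fun _ => f (φ j x0) := by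
          funext x; rw [hconst x]
        rw [heq, integral_const, integral_const]
        simp [← h0]
      · set g : X → ℝ := fun x => (αS:ℝ)⁻¹ * f (φ j x) with hg
        have hαne : (αS:ℝ) ≠ 0 := ne_of_gt h0
        have hglip : LipschitzWith 1 g := by
          refine LipschitzWith.of_dist_le_mul fun x y => ?_
          have hcomp : dist (f (φ j x)) (f (φ j y)) ≤ (αS:ℝ) * dist x y := by
            have := (hf.comp (hφ j)).dist_le_mul x y
            simpa using this
          have : dist (g x) (g y) = (αS:ℝ)⁻¹ * dist (f (φ j x)) (f (φ j y)) := by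
            rw [hg]
            simp only [Real.dist_eq, ← mul_sub, abs_mul, abs_of_nonneg (inv_nonneg.2 hα0)]
          rw [this, NNReal.coe_one, one_mul]
          calc (αS:ℝ)⁻¹ * dist (f (φ j x)) (f (φ j y))
              ≤ (αS:ℝ)⁻¹ * ((αS:ℝ) * dist x y) :=
                mul_le_mul_of_nonneg_left hcomp (inv_nonneg.2 hα0)
            _ = dist x y := by field_simp
        have hfg : ∀ σ : Measure X, ∫ x, f (φ j x) ∂σ = (αS:ℝ) * ∫ x, g x ∂σ := by
          intro σ
          rw [hg]
          simp only
          rw [integral_const_mul _, ← mul_assoc, mul_inv_cancel₀ hαne, one_mul]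
        rw [hfg ρ, hfg ρ', ← mul_sub, abs_mul, abs_of_nonneg hα0]
        exact mul_le_mul_of_nonneg_left (le_dMK hbdd hglip) hα0
    calc |∑ j, ((p j : ℝ) * ∫ x, f (φ j x) ∂ρ - (p j : ℝ) * ∫ x, f (φ j x) ∂ρ')|
        ≤ ∑ j, |(p j : ℝ) * ∫ x, f (φ j x) ∂ρ - (p j : ℝ) * ∫ x, f (φ j x) ∂ρ'| :=
          Finset.abs_sum_le_sum_abs _ _
      _ ≤ ∑ j, (p j : ℝ) * ((αS:ℝ) * dMK ρ ρ') := by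
          refine Finset.sum_le_sum fun j _ => ?_
          rw [← mul_sub, abs_mul, abs_of_nonneg (p j).coe_nonneg]
          exact mul_le_mul_of_nonneg_left (hj j) (p j).coe_nonneg
      _ = (αS:ℝ) * dMK ρ ρ' := by rw [← Finset.sum_mul, hpsum, one_mul]
  -- one-step estimate
  have hstep : ∀ (ρ : Measure X), IsProbabilityMeasure ρ → ∀ K, IsCompact K → ρ Kᶜ = 0 →
      dMK (Mhat ρ) μS ≤ ε + (αS:ℝ) * dMK ρ μS := by
    intro ρ hprob K hKc hK0
    haveI := hprob
    obtain ⟨K1, hK1c, hK1⟩ := himφ K hKc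
    obtain ⟨K2, hK2c, hK2⟩ := himr K hKc
    haveI hprob1 : IsProbabilityMeasure (Mhat ρ) := Mop_prob hp1 hwm ρ
    haveI hprob2 : IsProbabilityMeasure (Mphi ρ) := Mop_prob hp1 hφm ρ
    have hnull1 : (Mhat ρ) K2ᶜ = 0 :=
      Mop_null p hwm hK0 hK2c.isClosed.measurableSet hK2
    have hnull2 : (Mphi ρ) K1ᶜ = 0 :=
      Mop_null p hφm hK0 hK1c.isClosed.measurableSet hK1
    have bdd1 := dset_bddAbove hK2c hK1c hnull1 hnull2
    have bdd2 := dset_bddAbove hK1c hKSc hnull2 hKS0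
    have ht := dMK_triangle (σ := Mphi ρ) bdd1 bdd2
    have hc : dMK (Mphi ρ) μS ≤ (αS:ℝ) * dMK ρ μS := by
      have h5 := hcontr ρ μS hprob inferInstance K KS hKc hKSc hK0 hKS0
      rwa [show Mphi μS = μS from hμSfix] at h5
    have hp5 := hpert ρ hprob K hKc hK0
    linarith
  have hbddν := dset_bddAbove hKνc hKSc hKν0 hKS0
  have hd0 : 0 ≤ dMK ν μS := dMK_nonneg hbddν
  have hεα : 0 < ε / (1 - (αS:ℝ)) := div_pos hε h1α
  have key : ∀ n : ℕ, dMK (Mhat^[n] ν) μS ≤ ε / (1 - (αS:ℝ)) + (αS:ℝ)^n * dMK ν μS := by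
    intro n
    induction n with
    | zero => simp only [Function.iterate_zero, id_eq, pow_zero, one_mul]; linarith
    | succ n ih =>
      obtain ⟨hprob, K, hKc, hK0⟩ := hnice n
      rw [Function.iterate_succ_apply']
      have h1 := hstep _ hprob K hKc hK0
      have h2 : (αS:ℝ) * dMK (Mhat^[n] ν) μS
          ≤ (αS:ℝ) * (ε / (1 - (αS:ℝ)) + (αS:ℝ)^n * dMK ν μS) :=
        mul_le_mul_of_nonneg_left ih hα0
      have h3 : ε + (αS:ℝ) * (ε / (1 - (αS:ℝ))) = ε / (1 - (αS:ℝ)) := by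
        field_simp
        ring
      have h4 : (αS:ℝ) * (ε / (1 - (αS:ℝ)) + (αS:ℝ)^n * dMK ν μS)
          = (αS:ℝ) * (ε / (1 - (αS:ℝ))) + (αS:ℝ)^(n+1) * dMK ν μS := by ring
      linarith
  refine ⟨key, ?_⟩
  have htend : Tendsto (fun n => (αS:ℝ)^n * dMK ν μS) atTop (nhds 0) := by
    simpa using (tendsto_pow_atTop_nhds_zero_of_lt_one hα0 hα1).mul_const (dMK ν μS)
  have hev : ∀ᶠ n in atTop, (αS:ℝ)^n * dMK ν μS < ε / (1 - (αS:ℝ)) :=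
    htend.eventually_lt_const hεα
  filter_upwards [hev] with n hn
  have h6 := key n
  have h7 : ε / (1 - (αS:ℝ)) + ε / (1 - (αS:ℝ)) = 2 * ε / (1 - (αS:ℝ)) := by ring
  linarith
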